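/- Let p > 2 and M > 0. Define G : [0, +∞) → ℝ by G(t) = max(F₂'(t) − F₁'(t) + t^{p−1}, 0) for t > 0 and G(0) = 0. Then there exist τ ∈ (0, δ₀) and L > 0 such that G(t) = 0 for all t ∈ [0, τ], |G(s) − G(t)| ≤ L·|s − t| for all s, t ∈ [0, M], and G(t) ≤ L·t for all t ∈ [0, M]. -/

import Mathlib

open Real Filter

noncomputable def F1 (δ₀ s : ℝ) : ℝ :=
  if s = 0 then 0
  else if |s| < δ₀ then -(1/2) * s^2 * Real.log (s^2)
  else -(1/2) * s^2 * (Real.log (δ₀^2) + 3) + 2*δ₀*|s| - δ₀^2/2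

noncomputable def F1' (δ₀ s : ℝ) : ℝ :=
  if s = 0 then 0
  else if |s| < δ₀ then -(Real.log (s^2) + 1) * s
  else -(Real.log (δ₀^2) + 3) * s + 2*δ₀*(Real.sign s)

noncomputable def F2 (δ₀ s : ℝ) : ℝ :=
  if |s| < δ₀ then 0
  else (1/2) * s^2 * Real.log (s^2/δ₀^2) + 2*δ₀*|s| - (3/2)*s^2 - δ₀^2/2

noncomputable def F2' (δ₀ s : ℝ) : ℝ :=
  if |s| < δ₀ then 0
  else s * Real.log (s^2/δ₀^2) - 2*s + 2*δ₀*(Real.sign s)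

noncomputable def Gfun (δ₀ p t : ℝ) : ℝ :=
  if t = 0 then 0 else max (F2' δ₀ t - F1' δ₀ t + t ^ (p - 1)) 0

/-- the global formula -/
noncomputable def hfun (p t : ℝ) : ℝ := t * (2 * Real.log t + 1) + t ^ (p - 1)

lemma Gfun_eq (δ₀ p t : ℝ) (hδ₀ : 0 < δ₀) (hp : 2 < p) (ht : 0 ≤ t) :
    Gfun δ₀ p t = max (hfun p t) 0 := by
  unfold Gfun hfun
  rcases eq_or_lt_of_le ht with h0 | h0
  · subst h0
    simp [Real.zero_rpow (show p - 1 ≠ 0 by intro h; nlinarith [h]), Real.log_zero]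
  have habs : |t| = t := abs_of_pos h0
  have hsgn : Real.sign t = 1 := Real.sign_of_pos h0
  have hlog : Real.log (t^2) = 2 * Real.log t := by
    rw [Real.log_pow]; push_cast; ring
  rw [if_neg (ne_of_gt h0)]
  unfold F2' F1'
  rw [if_neg (ne_of_gt h0)]
  by_cases hlt : |t| < δ₀
  · rw [if_pos hlt, if_pos hlt, hlog]; ring_nf
  · rw [if_neg hlt, if_neg hlt, hsgn]
    have hlogq : Real.log (t^2/δ₀^2) = 2 * Real.log t - 2 * Real.log δ₀ := by
      rw [Real.log_div (by positivity) (by positivity), Real.log_pow, Real.log_pow]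
      push_cast; ring
    rw [hlogq]
    have h4 : Real.log (δ₀^2) = 2 * Real.log δ₀ := by rw [Real.log_pow]; push_cast; ring
    rw [h4]; ring

lemma hfun_nonpos (p t : ℝ) (hp : 2 < p) (ht : 0 ≤ t) (ht' : t ≤ Real.exp (-1)) :
    hfun p t ≤ 0 := by
  rcases eq_or_lt_of_le ht with h0 | h0
  · subst h0
    simp [hfun, Real.zero_rpow (show p - 1 ≠ 0 by intro h; nlinarith [h])]
  have hlt1 : t ≤ 1 := le_trans ht' (by
    rw [show (1:ℝ) = Real.exp 0 by simp]
    exact Real.exp_le_exp.mpr (by norm_num))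
  have hlog : Real.log t ≤ -1 := by
    calc Real.log t ≤ Real.log (Real.exp (-1)) := Real.log_le_log h0 ht'
    _ = -1 := Real.log_exp _
  have hpow : t ^ (p - 1) ≤ t := by
    calc t ^ (p-1) = t ^ (1:ℝ) * t ^ (p-2) := by
          rw [← Real.rpow_add h0]; ring_nf
    _ ≤ t ^ (1:ℝ) * 1 := by
          apply mul_le_mul_of_nonneg_left _ (by positivity)
          exact Real.rpow_le_one ht hlt1 (by linarith)
    _ = t := by simp
  have : t * (2 * Real.log t + 1) ≤ t * (-1) := by
    apply mul_le_mul_of_nonneg_left _ ht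
    linarith
  unfold hfun; nlinarith

lemma hfun_hasDeriv (p t : ℝ) (hp : 2 < p) (ht : 0 < t) :
    HasDerivAt (hfun p) (2 * Real.log t + 3 + (p-1) * t ^ (p - 2)) t := by
  have h1 : HasDerivAt (fun t : ℝ => t * (2 * Real.log t + 1))
      (1 * (2 * Real.log t + 1) + t * (2 * t⁻¹)) t :=
    (hasDerivAt_id t).mul (((Real.hasDerivAt_log (ne_of_gt ht)).const_mul 2).add_const 1)
  have h2 : HasDerivAt (fun t : ℝ => t ^ (p-1)) ((p-1) * t ^ (p-1-1)) t :=
    Real.hasDerivAt_rpow_const (Or.inl (ne_of_gt ht))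
  have h3 := h1.add h2
  refine HasDerivAt.congr_deriv (f := hfun p) h3 ?_
  have : p - 1 - 1 = p - 2 := by ring
  rw [this]
  field_simp
  ring

theorem stmt_18 (δ₀ : ℝ) (hδ₀ : 0 < δ₀) (hδ₀' : δ₀ < Real.exp (-(3/2)))
    (p M : ℝ) (hp : 2 < p) (hM : 0 < M) :
    ∃ τ : ℝ, 0 < τ ∧ τ < δ₀ ∧
      ∃ L : ℝ, 0 < L ∧
        (∀ t ∈ Set.Icc (0:ℝ) τ, Gfun δ₀ p t = 0) ∧
        (∀ s ∈ Set.Icc (0:ℝ) M, ∀ t ∈ Set.Icc (0:ℝ) M,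
          |Gfun δ₀ p s - Gfun δ₀ p t| ≤ L * |s - t|) ∧
        (∀ t ∈ Set.Icc (0:ℝ) M, Gfun δ₀ p t ≤ L * t) := by
  set a : ℝ := Real.exp (-1) with ha
  have ha0 : 0 < a := Real.exp_pos _
  have hGzero : ∀ t, 0 ≤ t → t ≤ a → Gfun δ₀ p t = 0 := by
    intro t ht ht'
    rw [Gfun_eq δ₀ p t hδ₀ hp ht, max_eq_right (hfun_nonpos p t hp ht ht')]
  have hδa : δ₀ < a := lt_trans hδ₀' (Real.exp_lt_exp.mpr (by norm_num))
  set M' : ℝ := max M 1 with hM'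
  have hM'1 : (1:ℝ) ≤ M' := le_max_right _ _
  have haM' : a ≤ M' := le_trans (le_of_lt (Real.exp_lt_one_iff.mpr (by norm_num))) hM'1
  set L : ℝ := 2 * Real.log M' + 3 + 2 + (p-1) * M' ^ (p-2) + 1 with hL
  have hlogM' : 0 ≤ Real.log M' := Real.log_nonneg hM'1
  have hL0 : 0 < L := by
    have : 0 < (p-1) * M' ^ (p-2) :=
      mul_pos (by linarith) (Real.rpow_pos_of_pos (by linarith) _)
    rw [hL]; linarith
  have key : ∀ s ∈ Set.Icc a M', ∀ t ∈ Set.Icc a M',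
      |Gfun δ₀ p s - Gfun δ₀ p t| ≤ L * |s - t| := by
    intro s hs t ht
    have hs0 : 0 < s := lt_of_lt_of_le ha0 hs.1
    have ht0 : 0 < t := lt_of_lt_of_le ha0 ht.1
    rw [Gfun_eq δ₀ p s hδ₀ hp hs0.le, Gfun_eq δ₀ p t hδ₀ hp ht0.le]
    calc |max (hfun p s) 0 - max (hfun p t) 0| ≤ |hfun p s - hfun p t| :=
          abs_max_sub_max_le_abs _ _ _
    _ ≤ L * |s - t| := by
        have hd : ∀ x ∈ Set.Icc a M',
            HasDerivWithinAt (hfun p) (2 * Real.log x + 3 + (p-1) * x ^ (p - 2))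
              (Set.Icc a M') x := fun x hx =>
          (hfun_hasDeriv p x hp (lt_of_lt_of_le ha0 hx.1)).hasDerivWithinAt
        have hb : ∀ x ∈ Set.Icc a M',
            ‖2 * Real.log x + 3 + (p-1) * x ^ (p - 2)‖ ≤ L := by
          intro x hx
          have hx0 : 0 < x := lt_of_lt_of_le ha0 hx.1
          have hlogle : Real.log x ≤ Real.log M' := Real.log_le_log hx0 hx.2
          have hlogge : -1 ≤ Real.log x := by
            have := Real.log_le_log ha0 hx.1
            rwa [ha, Real.log_exp] at this
          have hpow : x ^ (p-2) ≤ M' ^ (p-2) :=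
            Real.rpow_le_rpow hx0.le hx.2 (by linarith)
          have hpow0 : 0 ≤ x ^ (p-2) := Real.rpow_nonneg hx0.le _
          rw [Real.norm_eq_abs, abs_le]
          constructor
          · nlinarith
          · nlinarith
        have := Convex.norm_image_sub_le_of_norm_hasDerivWithin_le hd hb
          (convex_Icc a M') ht hs
        rwa [Real.norm_eq_abs, Real.norm_eq_abs] at this
  have lip : ∀ s ∈ Set.Icc (0:ℝ) M', ∀ t ∈ Set.Icc (0:ℝ) M',
      s ≤ t → |Gfun δ₀ p s - Gfun δ₀ p t| ≤ L * |s - t| := by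
    intro s hs t ht hst
    by_cases hta : t ≤ a
    · rw [hGzero s hs.1 (le_trans hst hta), hGzero t ht.1 hta]
      simp
      positivity
    push_neg at hta
    by_cases hsa : a ≤ s
    · exact key s ⟨hsa, hs.2⟩ t ⟨hta.le, ht.2⟩
    push_neg at hsa
    rw [hGzero s hs.1 hsa.le]
    have h1 : |Gfun δ₀ p a - Gfun δ₀ p t| ≤ L * |a - t| :=
      key a ⟨le_refl a, haM'⟩ t ⟨hta.le, ht.2⟩
    rw [hGzero a (le_of_lt ha0) (le_refl a)] at h1
    have h2 : |a - t| ≤ |s - t| := by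
      rw [abs_sub_comm, abs_of_pos (by linarith), abs_sub_comm s t, abs_of_pos (by linarith)]
      linarith
    calc |0 - Gfun δ₀ p t| ≤ L * |a - t| := h1
    _ ≤ L * |s - t| := mul_le_mul_of_nonneg_left h2 hL0.le
  refine ⟨δ₀/2, by linarith, by linarith, L, hL0, ?_, ?_, ?_⟩
  · intro t ht
    exact hGzero t ht.1 (le_trans ht.2 (by linarith))
  · intro s hs t ht
    have hsM' : s ∈ Set.Icc (0:ℝ) M' := ⟨hs.1, le_trans hs.2 (le_max_left _ _)⟩
    have htM' : t ∈ Set.Icc (0:ℝ) M' := ⟨ht.1, le_trans ht.2 (le_max_left _ _)⟩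
    rcases le_total s t with h | h
    · exact lip s hsM' t htM' h
    · rw [abs_sub_comm, abs_sub_comm s t]
      exact lip t htM' s hsM' h
  · intro t ht
    have htM' : t ∈ Set.Icc (0:ℝ) M' := ⟨ht.1, le_trans ht.2 (le_max_left _ _)⟩
    have h0 : (0:ℝ) ∈ Set.Icc (0:ℝ) M' := ⟨le_refl 0, by linarith⟩
    have hle := lip 0 h0 t htM' ht.1
    rw [hGzero 0 (le_refl 0) ha0.le] at hle
    have hG0 : 0 ≤ Gfun δ₀ p t := by
      rw [Gfun_eq δ₀ p t hδ₀ hp ht.1]; exact le_max_right _ _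
    have habs : |Gfun δ₀ p t - 0| = Gfun δ₀ p t := by rw [sub_zero, abs_of_nonneg hG0]
    have habs2 : |(0:ℝ) - t| = t := by rw [abs_sub_comm, sub_zero, abs_of_nonneg ht.1]
    rw [abs_sub_comm, habs, habs2] at hle
    exact hle
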